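/- Let p, s, t ∈ ℕ and let A_xx, B_xx be skew-symmetric p×p, A_xs, B_xs be p×s, A_xy, B_xy be p×t, and A_ss, B_ss be skew-symmetric s×s complex matrices. Form the skew-symmetric (p+s+t)×(p+s+t) matrices A = [[A_xx, A_xs, A_xy],[−A_xsᵀ, A_ss, 0],[−A_xyᵀ, 0, 0]] and B = [[B_xx, B_xs, B_xy],[−B_xsᵀ, B_ss, 0],[−B_xyᵀ, 0, 0]] (3×3 block form). Assume: (1) for every λ ∈ ℂ the matrix (A_xy + λB_xy)ᵀ has trivial kernel (i.e. A_xy + λB_xy has full row rank p), and also B_xyᵀ has trivial kernel; (2) there exists λ₀ ∈ ℂ such that A_ss + λ₀B_ss is invertible, or B_ss is invertible. Then there exists an invertible complex (p+s+t)×(p+s+t) matrix T such that Tᵀ·A·T = [[0, 0, A_xy],[0, A_ss, 0],[−A_xyᵀ, 0, 0]] and Tᵀ·B·T = [[0, 0, B_xy],[0, B_ss, 0],[−B_xyᵀ, 0, 0]]. (Equivalently, the Jordan–Kronecker decomposition of the pencil A + λB is the union of those of the pencils P_K = ([[0, A_xy],[−A_xyᵀ, 0]], [[0, B_xy],[−B_xyᵀ,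 0]]) and P_J = (A_ss, B_ss).) -/

import Mathlib

open Matrix

noncomputable section

/-- The skew-symmetric block matrix `[[Xxx, Xxs, Xxy], [-Xxsᵀ, Xss, 0], [-Xxyᵀ, 0, 0]]`. -/
def triMat {p s t : ℕ} (Xxx : Matrix (Fin p) (Fin p) ℂ) (Xxs : Matrix (Fin p) (Fin s) ℂ)
    (Xxy : Matrix (Fin p) (Fin t) ℂ) (Xss : Matrix (Fin s) (Fin s) ℂ) :
    Matrix (Fin p ⊕ (Fin s ⊕ Fin t)) (Fin p ⊕ (Fin s ⊕ Fin t)) ℂ :=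
  Matrix.fromBlocks Xxx (Matrix.fromCols Xxs Xxy)
    (Matrix.fromRows (-Xxsᵀ) (-Xxyᵀ)) (Matrix.fromBlocks Xss 0 0 0)

namespace JKHelpers

set_option linter.unusedSectionVars false

lemma mem_range_of_dual {V W : Type*} [AddCommGroup V] [Module ℂ V] [AddCommGroup W]
    [Module ℂ W] (f : V →ₗ[ℂ] W) (w : W)
    (h : ∀ g : W →ₗ[ℂ] ℂ, (∀ v, g (f v) = 0) → g w = 0) : w ∈ LinearMap.range f := by
  by_contra hw
  have hq : (LinearMap.range f).mkQ w ≠ 0 := by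
    simpa [Submodule.Quotient.mk_eq_zero] using hw
  rw [Ne, ← Module.forall_dual_apply_eq_zero_iff ℂ] at hq
  push_neg at hq
  obtain ⟨φ, hφ⟩ := hq
  exact hφ (h (φ.comp (LinearMap.range f).mkQ) (fun v => by
    have : Submodule.Quotient.mk (f v) = (0 : W ⧸ LinearMap.range f) := by
      simp [Submodule.Quotient.mk_eq_zero]
    simp [this]))

lemma eig_core {n m : ℕ} (f g : (Fin n → ℂ) →ₗ[ℂ] (Fin m → ℂ))
    (U : Submodule ℂ (Fin n → ℂ)) (hU : U ≠ ⊥)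
    (hg : ∀ u, g u = 0 → u = 0)
    (hle : U.map f ≤ U.map g) :
    ∃ u, u ∈ U ∧ u ≠ 0 ∧ ∃ c : ℂ, f u = c • g u := by
  haveI : Nontrivial U := Submodule.nontrivial_iff_ne_bot.mpr hU
  have hginj : Function.Injective (g.domRestrict U) := by
    intro a b hab
    have := hg (a - b : U) (by simpa [sub_eq_zero, map_sub] using sub_eq_zero.mpr hab)
    exact Subtype.ext (by simpa [sub_eq_zero] using this)
  have hmem : ∀ u : U, (f.domRestrict U) u ∈ LinearMap.range (g.domRestrict U) := by
    intro u
    have : f u ∈ U.map g := hle ⟨u, u.2, rfl⟩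
    obtain ⟨v, hv, hveq⟩ := this
    exact ⟨⟨v, hv⟩, hveq⟩
  set gE : U ≃ₗ[ℂ] LinearMap.range (g.domRestrict U) :=
    LinearEquiv.ofInjective (g.domRestrict U) hginj
  set e : U →ₗ[ℂ] U :=
    gE.symm.toLinearMap ∘ₗ (f.domRestrict U).codRestrict _ hmem
  obtain ⟨c, hc⟩ := Module.End.exists_eigenvalue e
  obtain ⟨v, hv⟩ := hc.exists_hasEigenvector
  refine ⟨v, v.2, by simpa using hv.right, c, ?_⟩
  have h1 : gE (e v) = (f.domRestrict U).codRestrict _ hmem v := by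
    simp [e, LinearEquiv.apply_symm_apply]
  have h2 : (g.domRestrict U) (e v) = f v := congrArg Subtype.val h1
  rw [hv.apply_eq_smul] at h2
  rw [← h2]
  simp

lemma dual_rep {m : ℕ} (g : (Fin m → ℂ) →ₗ[ℂ] ℂ) (v : Fin m → ℂ) :
    g v = ∑ i, v i * g (Pi.single i 1) := by
  conv_lhs => rw [show v = ∑ i, Pi.single i (v i) from (Finset.univ_sum_single v).symm]
  rw [map_sum]
  congr 1; ext i
  have : (Pi.single i (v i) : Fin m → ℂ) = v i • (Pi.single i (1:ℂ) : Fin m → ℂ) := by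
    rw [← Pi.single_smul, smul_eq_mul, mul_one]
  rw [this, _root_.map_smul, smul_eq_mul]

/-- surjectivity of `mulVecLin M` from injectivity of `mulVec Mᵀ`. -/
lemma surj_of_inj_transpose {m n : ℕ} (M : Matrix (Fin m) (Fin n) ℂ)
    (h : ∀ u, Mᵀ.mulVec u = 0 → u = 0) : Function.Surjective M.mulVecLin := by
  intro w
  suffices hmem : w ∈ LinearMap.range M.mulVecLin by
    obtain ⟨v, hv⟩ := hmem; exact ⟨v, hv⟩
  apply mem_range_of_dual
  intro g hg
  set u : Fin m → ℂ := fun i => g (Pi.single i 1) with hu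
  have hMu : Mᵀ.mulVec u = 0 := by
    ext j
    have h0 := hg (Pi.single j 1)
    rw [Matrix.mulVecLin_apply, dual_rep] at h0
    simpa [Matrix.mulVec, dotProduct, Pi.single_apply, u,
      mul_comm] using h0
  have hu0 := h u hMu
  rw [dual_rep]
  have hz : ∀ i, g (Pi.single i 1) = 0 := fun i => congrFun hu0 i
  simp [hz]

lemma range_mulVecLin_eq_bot {m n : ℕ} {M : Matrix (Fin m) (Fin n) ℂ}
    (h : LinearMap.range M.mulVecLin = ⊥) : M = 0 := by
  rw [LinearMap.range_eq_bot] at h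
  ext i j
  have h0 : M.mulVec (Pi.single j 1) = 0 := by
    rw [← M.mulVecLin_apply, h]; rfl
  have := congrFun h0 i
  simpa [Matrix.mulVec_single] using this

lemma mulVecLin_neg' {m n : ℕ} (M : Matrix (Fin m) (Fin n) ℂ) :
    (-M).mulVecLin = -M.mulVecLin := by
  ext v i; simp [Matrix.neg_mulVec]

lemma claimA {p t : ℕ} (Axy Bxy : Matrix (Fin p) (Fin t) ℂ)
    (h1 : ∀ lam : ℂ, ∀ u : Fin p → ℂ, (Axy + lam • Bxy)ᵀ.mulVec u = 0 → u = 0)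
    (h1inf : ∀ u : Fin p → ℂ, Bxyᵀ.mulVec u = 0 → u = 0)
    (W1 W2 : Matrix (Fin p) (Fin p) ℂ) (hW1 : W1ᵀ = -W1) (hW2 : W2ᵀ = -W2)
    (hrel : W1 * Axy + W2 * Bxy = 0) : W1 = 0 ∧ W2 = 0 := by
  have hA0 : ∀ u : Fin p → ℂ, Axyᵀ.mulVec u = 0 → u = 0 := by
    intro u hu
    exact h1 0 u (by simpa using hu)
  have hAs : Function.Surjective Axy.mulVecLin := surj_of_inj_transpose _ hA0
  have hBs : Function.Surjective Bxy.mulVecLin := surj_of_inj_transpose _ h1inf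
  have hcol : Axyᵀ * W1 = -(Bxyᵀ * W2) := by
    have h' := congrArg Matrix.transpose hrel
    rw [Matrix.transpose_add, Matrix.transpose_mul, Matrix.transpose_mul, hW1, hW2,
      Matrix.transpose_zero, Matrix.mul_neg, Matrix.mul_neg, ← neg_add, neg_eq_zero] at h'
    exact eq_neg_of_add_eq_zero_left h'
  have e1 : W1 * Axy = -(W2 * Bxy) := eq_neg_of_add_eq_zero_left hrel
  set U : Submodule ℂ (Fin p → ℂ) := LinearMap.range W1.mulVecLin with hUdef
  have r1 : LinearMap.range (W1 * Axy).mulVecLin = U := by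
    rw [Matrix.mulVecLin_mul, LinearMap.range_comp, LinearMap.range_eq_top.mpr hAs,
      Submodule.map_top]
  have r2 : LinearMap.range (W2 * Bxy).mulVecLin = LinearMap.range W2.mulVecLin := by
    rw [Matrix.mulVecLin_mul, LinearMap.range_comp, LinearMap.range_eq_top.mpr hBs,
      Submodule.map_top]
  have hUU : LinearMap.range W2.mulVecLin = U := by
    rw [← r2, ← r1, e1, mulVecLin_neg', LinearMap.range_neg]
  by_cases hbot : U = ⊥
  · refine ⟨range_mulVecLin_eq_bot hbot, range_mulVecLin_eq_bot ?_⟩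
    rw [hUU]; exact hbot
  · exfalso
    have hle : U.map Axyᵀ.mulVecLin ≤ U.map Bxyᵀ.mulVecLin := by
      rintro x ⟨u, hu, rfl⟩
      obtain ⟨v, rfl⟩ := hu
      refine ⟨W2.mulVec (-v), ?_, ?_⟩
      · have : W2.mulVec (-v) ∈ LinearMap.range W2.mulVecLin := ⟨-v, rfl⟩
        rwa [hUU] at this
      · simp only [Matrix.mulVecLin_apply, Matrix.mulVec_mulVec]
        rw [hcol]
        simp [Matrix.neg_mulVec, Matrix.mulVec_neg, Matrix.mulVec_mulVec]
    obtain ⟨u, hu, hune, c, hc⟩ := eig_core Axyᵀ.mulVecLin Bxyᵀ.mulVecLin U hbot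
      (fun u hu => h1inf u (by rwa [Matrix.mulVecLin_apply] at hu)) hle
    refine hune (h1 (-c) u ?_)
    rw [Matrix.transpose_add, Matrix.transpose_smul, Matrix.add_mulVec,
      Matrix.smul_mulVec]
    simp only [Matrix.mulVecLin_apply] at hc
    rw [hc]
    simp

lemma pencil_mulVec {p t : ℕ} (A B : Matrix (Fin p) (Fin t) ℂ) (d : ℂ) (u : Fin p → ℂ) :
    (A + d • B)ᵀ.mulVec u = Aᵀ.mulVec u + d • Bᵀ.mulVec u := by
  rw [Matrix.transpose_add, Matrix.transpose_smul, Matrix.add_mulVec,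
    Matrix.smul_mulVec]

lemma core_W_eq_zero {p s t : ℕ} (F G : Matrix (Fin p) (Fin t) ℂ)
    (N : Matrix (Fin s) (Fin s) ℂ) (W : Matrix (Fin p) (Fin s) ℂ)
    (hGinj : ∀ u, Gᵀ.mulVec u = 0 → u = 0)
    (hcontra : ∀ u : Fin p → ℂ, ∀ c : ℂ, Fᵀ.mulVec u = c • Gᵀ.mulVec u → u ≠ 0 → False)
    (hrel : Fᵀ * W = Gᵀ * W * N) : W = 0 := by
  set U := LinearMap.range W.mulVecLin with hUdef
  by_cases hbot : U = ⊥
  · exact range_mulVecLin_eq_bot hbot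
  · exfalso
    have hle : U.map Fᵀ.mulVecLin ≤ U.map Gᵀ.mulVecLin := by
      rintro x ⟨u, hu, rfl⟩
      obtain ⟨v, rfl⟩ := hu
      refine ⟨W.mulVec (N.mulVec v), ⟨N.mulVec v, rfl⟩, ?_⟩
      simp only [Matrix.mulVecLin_apply, Matrix.mulVec_mulVec]
      rw [← Matrix.mul_assoc, ← hrel]
    obtain ⟨u, hu, hune, c, hc⟩ := eig_core Fᵀ.mulVecLin Gᵀ.mulVecLin U hbot
      (fun u hu => hGinj u (by rwa [Matrix.mulVecLin_apply] at hu)) hle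
    simp only [Matrix.mulVecLin_apply] at hc
    exact hcontra u c hc hune

lemma claimB {p s t : ℕ} (Axy Bxy : Matrix (Fin p) (Fin t) ℂ)
    (Ass Bss : Matrix (Fin s) (Fin s) ℂ)
    (h1 : ∀ lam : ℂ, ∀ u : Fin p → ℂ, (Axy + lam • Bxy)ᵀ.mulVec u = 0 → u = 0)
    (h1inf : ∀ u : Fin p → ℂ, Bxyᵀ.mulVec u = 0 → u = 0)
    (h2 : (∃ lam₀ : ℂ, IsUnit (Ass + lam₀ • Bss).det) ∨ IsUnit Bss.det)
    (G1 G2 : Matrix (Fin s) (Fin p) ℂ)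
    (e1 : Ass * G1 + Bss * G2 = 0) (e2 : G1 * Axy + G2 * Bxy = 0) :
    G1 = 0 ∧ G2 = 0 := by
  rcases h2 with ⟨lam₀, hS⟩ | hB
  · set S := Ass + lam₀ • Bss with hSdef
    set A' := Axy + lam₀ • Bxy with hA'def
    set G' := G2 - lam₀ • G1 with hG'def
    have he1' : S * G1 + Bss * G' = 0 := by
      have : S * G1 + Bss * G' = Ass * G1 + Bss * G2 := by
        simp only [hSdef, hG'def, Matrix.add_mul, Matrix.mul_sub, Matrix.smul_mul,
          Matrix.mul_smul]
        abel
      rw [this, e1]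
    have he2' : G1 * A' + G' * Bxy = 0 := by
      have : G1 * A' + G' * Bxy = G1 * Axy + G2 * Bxy := by
        simp only [hA'def, hG'def, Matrix.mul_add, Matrix.sub_mul, Matrix.smul_mul,
          Matrix.mul_smul]
        abel
      rw [this, e2]
    have hG1 : G1 = -(S⁻¹ * (Bss * G')) := by
      have h' : S * G1 = -(Bss * G') := eq_neg_of_add_eq_zero_left he1'
      calc G1 = (S⁻¹ * S) * G1 := by rw [Matrix.nonsing_inv_mul S hS, Matrix.one_mul]
      _ = S⁻¹ * (S * G1) := by rw [Matrix.mul_assoc]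
      _ = -(S⁻¹ * (Bss * G')) := by rw [h', Matrix.mul_neg]
    have hrel : G' * Bxy = (S⁻¹ * (Bss * G')) * A' := by
      have h' : G' * Bxy = -(G1 * A') := by
        rw [eq_neg_of_add_eq_zero_right he2']
      rw [h', hG1, Matrix.neg_mul, neg_neg]
    have hrelT : Bxyᵀ * G'ᵀ = A'ᵀ * G'ᵀ * (S⁻¹ * Bss)ᵀ := by
      have := congrArg Matrix.transpose hrel
      rw [Matrix.transpose_mul, Matrix.transpose_mul] at this
      rw [this]
      rw [show (S⁻¹ * (Bss * G'))ᵀ = G'ᵀ * (S⁻¹ * Bss)ᵀ by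
        rw [← Matrix.mul_assoc, Matrix.transpose_mul]]
      rw [Matrix.mul_assoc]
    have hW : G'ᵀ = 0 := by
      refine core_W_eq_zero Bxy A' ((S⁻¹ * Bss)ᵀ) G'ᵀ ?_ ?_ hrelT
      · intro u hu; exact h1 lam₀ u hu
      · intro u c hc hune
        by_cases hc0 : c = 0
        · exact hune (h1inf u (by simpa [hc0] using hc))
        · refine hune (h1 (lam₀ - c⁻¹) u ?_)
          have hA'u : A'ᵀ.mulVec u = Axyᵀ.mulVec u + lam₀ • Bxyᵀ.mulVec u :=
            pencil_mulVec Axy Bxy lam₀ u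
          have key : (Axy + (lam₀ - c⁻¹) • Bxy)ᵀ.mulVec u
              = A'ᵀ.mulVec u - c⁻¹ • Bxyᵀ.mulVec u := by
            rw [pencil_mulVec, hA'u, sub_smul]
            abel
          rw [key, hc, smul_smul, inv_mul_cancel₀ hc0, one_smul, sub_self]
    have hG' : G' = 0 := by
      have := congrArg Matrix.transpose hW
      simpa using this
    have hG10 : G1 = 0 := by rw [hG1, hG', Matrix.mul_zero, Matrix.mul_zero, neg_zero]
    have hG20 : G2 = 0 := by
      have : G2 = G' + lam₀ • G1 := by rw [hG'def]; abel
      rw [this, hG', hG10, smul_zero, add_zero]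
    exact ⟨hG10, hG20⟩
  · have hG2 : G2 = -(Bss⁻¹ * (Ass * G1)) := by
      have h' : Bss * G2 = -(Ass * G1) := eq_neg_of_add_eq_zero_right e1
      calc G2 = (Bss⁻¹ * Bss) * G2 := by rw [Matrix.nonsing_inv_mul Bss hB, Matrix.one_mul]
      _ = Bss⁻¹ * (Bss * G2) := by rw [Matrix.mul_assoc]
      _ = -(Bss⁻¹ * (Ass * G1)) := by rw [h', Matrix.mul_neg]
    have hrel : G1 * Axy = (Bss⁻¹ * (Ass * G1)) * Bxy := by
      have h' : G1 * Axy = -(G2 * Bxy) := by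
        rw [eq_neg_of_add_eq_zero_left e2]
      rw [h', hG2, Matrix.neg_mul, neg_neg]
    have hrelT : Axyᵀ * G1ᵀ = Bxyᵀ * G1ᵀ * (Bss⁻¹ * Ass)ᵀ := by
      have := congrArg Matrix.transpose hrel
      rw [Matrix.transpose_mul, Matrix.transpose_mul] at this
      rw [this]
      rw [show (Bss⁻¹ * (Ass * G1))ᵀ = G1ᵀ * (Bss⁻¹ * Ass)ᵀ by
        rw [← Matrix.mul_assoc, Matrix.transpose_mul]]
      rw [Matrix.mul_assoc]
    have hW : G1ᵀ = 0 := by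
      refine core_W_eq_zero Axy Bxy ((Bss⁻¹ * Ass)ᵀ) G1ᵀ h1inf ?_ hrelT
      intro u c hc hune
      refine hune (h1 (-c) u ?_)
      rw [show ((-c) • Bxy : Matrix (Fin p) (Fin t) ℂ) = (-c) • Bxy from rfl]
      rw [pencil_mulVec, hc, neg_smul]
      abel
    have hG10 : G1 = 0 := by
      have := congrArg Matrix.transpose hW
      simpa using this
    have hG20 : G2 = 0 := by rw [hG2, hG10, Matrix.mul_zero, Matrix.mul_zero, neg_zero]
    exact ⟨hG10, hG20⟩

/-- trace pairing -/
def P {m n : Type*} [Fintype m] [Fintype n] (M G : Matrix m n ℂ) : ℂ :=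
  Matrix.trace (M * Gᵀ)

set_option linter.unusedSectionVars false
variable {m n l : Type*} [Fintype m] [Fintype n] [Fintype l]
  [DecidableEq m] [DecidableEq n] [DecidableEq l]

lemma P_add_right (M G G' : Matrix m n ℂ) : P M (G + G') = P M G + P M G' := by
  simp [P, Matrix.transpose_add, Matrix.mul_add]

lemma P_rep (g : Matrix m n ℂ →ₗ[ℂ] ℂ) (M : Matrix m n ℂ) :
    g M = P M (Matrix.of fun i j => g (Matrix.single i j 1)) := by
  have hP : P M (Matrix.of fun i j => g (Matrix.single i j 1))
      = ∑ i, ∑ j, M i j * g (Matrix.single i j 1) := by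
    simp [P, Matrix.trace, Matrix.diag, Matrix.mul_apply]
  rw [hP]
  conv_lhs => rw [Matrix.matrix_eq_sum_single M]
  rw [map_sum]
  congr 1; ext i
  rw [map_sum]
  congr 1; ext j
  rw [show Matrix.single i j (M i j) = M i j • Matrix.single i j (1:ℂ) by
    rw [Matrix.smul_single, smul_eq_mul, mul_one], _root_.map_smul, smul_eq_mul]

lemma P_ext {G : Matrix m n ℂ} (h : ∀ M, P M G = 0) : G = 0 := by
  ext i j
  have := h (Matrix.single i j 1)
  simp only [P, Matrix.trace, Matrix.diag, Matrix.mul_apply, Matrix.single,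
    Matrix.of_apply, Matrix.transpose_apply, ite_mul, one_mul, zero_mul] at this
  simpa [ite_and, Finset.sum_ite_eq] using this

lemma P_mul_right (M : Matrix m l ℂ) (C : Matrix l n ℂ) (G : Matrix m n ℂ) :
    P (M * C) G = P M (G * Cᵀ) := by
  simp [P, Matrix.transpose_mul, Matrix.mul_assoc]

lemma P_mul_left (C : Matrix m l ℂ) (M : Matrix l n ℂ) (G : Matrix m n ℂ) :
    P (C * M) G = P M (Cᵀ * G) := by
  simp only [P, Matrix.transpose_mul, Matrix.transpose_transpose]
  rw [Matrix.mul_assoc, Matrix.trace_mul_comm, Matrix.mul_assoc]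

lemma P_transpose (M : Matrix n m ℂ) (G : Matrix m n ℂ) : P Mᵀ G = P M Gᵀ := by
  simp only [P, Matrix.transpose_transpose]
  rw [← Matrix.transpose_mul, Matrix.trace_transpose, Matrix.trace_mul_comm]

lemma P_skew_symm {S G : Matrix m m ℂ} (hS : Sᵀ = -S) (hG : Gᵀ = G) : P S G = 0 := by
  have h2 : Matrix.trace (S * G) = -Matrix.trace (S * G) := by
    conv_lhs => rw [← Matrix.trace_transpose, Matrix.transpose_mul, hS, hG, Matrix.mul_neg,
      Matrix.trace_neg, Matrix.trace_mul_comm]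
  have h3 : (2:ℂ) * Matrix.trace (S * G) = 0 := by
    rw [two_mul]
    rw [eq_neg_iff_add_eq_zero] at h2
    exact h2
  have h4 := (mul_eq_zero.mp h3).resolve_left two_ne_zero
  simpa [P, hG] using h4



lemma P_sub_left {m n : Type*} [Fintype m] [Fintype n] (M M' G : Matrix m n ℂ) :
    P (M - M') G = P M G - P M' G := by
  simp [P, Matrix.sub_mul]

lemma P_sub_right {m n : Type*} [Fintype m] [Fintype n] (M G G' : Matrix m n ℂ) :
    P M (G - G') = P M G - P M G' := by
  simp [P, Matrix.transpose_sub, Matrix.mul_sub]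

lemma P_zero_right {m n : Type*} [Fintype m] [Fintype n] (M : Matrix m n ℂ) :
    P M (0 : Matrix m n ℂ) = 0 := by
  simp [P]

lemma prod_dual_rep {α β : Type*} [AddCommGroup α] [Module ℂ α] [AddCommGroup β] [Module ℂ β]
    (g : (α × β) →ₗ[ℂ] ℂ) (a : α) (b : β) :
    g (a, b) = g.comp (LinearMap.inl ℂ α β) a + g.comp (LinearMap.inr ℂ α β) b := by
  simp only [LinearMap.comp_apply, LinearMap.inl_apply, LinearMap.inr_apply]
  rw [← map_add]
  congr 1
  simp

section Exists
variable {p s t : ℕ}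
  (Axs Bxs : Matrix (Fin p) (Fin s) ℂ)
  (Axy Bxy : Matrix (Fin p) (Fin t) ℂ)
  (Ass Bss : Matrix (Fin s) (Fin s) ℂ)

lemma exists_XZ
    (h1 : ∀ lam : ℂ, ∀ u : Fin p → ℂ, (Axy + lam • Bxy)ᵀ.mulVec u = 0 → u = 0)
    (h1inf : ∀ u : Fin p → ℂ, Bxyᵀ.mulVec u = 0 → u = 0)
    (h2 : (∃ lam₀ : ℂ, IsUnit (Ass + lam₀ • Bss).det) ∨ IsUnit Bss.det) :
    ∃ (X : Matrix (Fin p) (Fin s) ℂ) (Z : Matrix (Fin t) (Fin s) ℂ),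
      Axs + X * Ass + Axy * Z = 0 ∧ Bxs + X * Bss + Bxy * Z = 0 := by
  set Φ : (Matrix (Fin p) (Fin s) ℂ × Matrix (Fin t) (Fin s) ℂ) →ₗ[ℂ]
      (Matrix (Fin p) (Fin s) ℂ × Matrix (Fin p) (Fin s) ℂ) :=
    { toFun := fun q => (q.1 * Ass + Axy * q.2, q.1 * Bss + Bxy * q.2)
      map_add' := by
        intro q r
        simp only [Prod.fst_add, Prod.snd_add, Matrix.add_mul, Matrix.mul_add, Prod.mk_add_mk,
          Prod.mk.injEq]
        constructor <;> abel
      map_smul' := by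
        intro c q
        simp only [Prod.smul_fst, Prod.smul_snd, Matrix.smul_mul, Matrix.mul_smul,
          RingHom.id_apply, Prod.smul_mk, smul_add] } with hΦ
  have hmem : (-Axs, -Bxs) ∈ LinearMap.range Φ := by
    apply mem_range_of_dual
    intro g hg
    set g1 := g.comp (LinearMap.inl ℂ _ _) with hg1
    set g2 := g.comp (LinearMap.inr ℂ _ _) with hg2
    set G1 : Matrix (Fin p) (Fin s) ℂ :=
      Matrix.of fun i j => g1 (Matrix.single i j 1) with hG1
    set G2 : Matrix (Fin p) (Fin s) ℂ :=
      Matrix.of fun i j => g2 (Matrix.single i j 1) with hG2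
    have hgrep : ∀ (M N : Matrix (Fin p) (Fin s) ℂ), g (M, N) = P M G1 + P N G2 := by
      intro M N
      rw [prod_dual_rep, ← hg1, ← hg2, P_rep g1 M, P_rep g2 N]
    -- equation from X-direction
    have eqX : ∀ X : Matrix (Fin p) (Fin s) ℂ, P X (G1 * Assᵀ + G2 * Bssᵀ) = 0 := by
      intro X
      have := hg (X, 0)
      rw [show Φ (X, 0) = (X * Ass, X * Bss) by simp [hΦ]] at this
      rw [hgrep] at this
      rw [P_add_right, ← P_mul_right, ← P_mul_right]
      exact this
    have eqZ : ∀ Z : Matrix (Fin t) (Fin s) ℂ, P Z (Axyᵀ * G1 + Bxyᵀ * G2) = 0 := by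
      intro Z
      have := hg (0, Z)
      rw [show Φ (0, Z) = (Axy * Z, Bxy * Z) by simp [hΦ]] at this
      rw [hgrep] at this
      rw [P_add_right, ← P_mul_left, ← P_mul_left]
      exact this
    have hE1 : G1 * Assᵀ + G2 * Bssᵀ = 0 := P_ext eqX
    have hE2 : Axyᵀ * G1 + Bxyᵀ * G2 = 0 := P_ext eqZ
    have hE1' : Ass * G1ᵀ + Bss * G2ᵀ = 0 := by
      have := congrArg Matrix.transpose hE1
      simpa [Matrix.transpose_add, Matrix.transpose_mul] using this
    have hE2' : G1ᵀ * Axy + G2ᵀ * Bxy = 0 := by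
      have := congrArg Matrix.transpose hE2
      simpa [Matrix.transpose_add, Matrix.transpose_mul] using this
    obtain ⟨hg10, hg20⟩ := claimB Axy Bxy Ass Bss h1 h1inf h2 G1ᵀ G2ᵀ hE1' hE2'
    have hG10 : G1 = 0 := by
      have := congrArg Matrix.transpose hg10; simpa using this
    have hG20 : G2 = 0 := by
      have := congrArg Matrix.transpose hg20; simpa using this
    have : g (-Axs, -Bxs) = P (-Axs) G1 + P (-Bxs) G2 := hgrep _ _
    rw [this, hG10, hG20, P_zero_right, P_zero_right, add_zero]
  obtain ⟨⟨X, Z⟩, hXZ⟩ := hmem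
  rw [hΦ] at hXZ
  simp only [LinearMap.coe_mk, AddHom.coe_mk, Prod.mk.injEq] at hXZ
  obtain ⟨hA, hB⟩ := hXZ
  refine ⟨X, Z, ?_, ?_⟩
  · rw [add_assoc, hA, add_neg_cancel]
  · rw [add_assoc, hB, add_neg_cancel]

lemma exists_Y
    (h1 : ∀ lam : ℂ, ∀ u : Fin p → ℂ, (Axy + lam • Bxy)ᵀ.mulVec u = 0 → u = 0)
    (h1inf : ∀ u : Fin p → ℂ, Bxyᵀ.mulVec u = 0 → u = 0)
    (S1 S2 : Matrix (Fin p) (Fin p) ℂ) (hS1 : S1ᵀ = -S1) (hS2 : S2ᵀ = -S2) :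
    ∃ Y : Matrix (Fin t) (Fin p) ℂ,
      Axy * Y - Yᵀ * Axyᵀ = S1 ∧ Bxy * Y - Yᵀ * Bxyᵀ = S2 := by
  set Ψ : Matrix (Fin t) (Fin p) ℂ →ₗ[ℂ]
      (Matrix (Fin p) (Fin p) ℂ × Matrix (Fin p) (Fin p) ℂ) :=
    { toFun := fun Y => (Axy * Y - Yᵀ * Axyᵀ, Bxy * Y - Yᵀ * Bxyᵀ)
      map_add' := by
        intro q r
        simp only [Matrix.mul_add, Matrix.transpose_add, Matrix.add_mul, Prod.mk_add_mk,
          Prod.mk.injEq]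
        constructor <;> abel
      map_smul' := by
        intro c q
        simp only [Matrix.mul_smul, Matrix.transpose_smul, Matrix.smul_mul,
          RingHom.id_apply, Prod.smul_mk, smul_sub] } with hΨ
  have hmem : (S1, S2) ∈ LinearMap.range Ψ := by
    apply mem_range_of_dual
    intro g hg
    set g1 := g.comp (LinearMap.inl ℂ _ _) with hg1
    set g2 := g.comp (LinearMap.inr ℂ _ _) with hg2
    set G1 : Matrix (Fin p) (Fin p) ℂ :=
      Matrix.of fun i j => g1 (Matrix.single i j 1) with hG1
    set G2 : Matrix (Fin p) (Fin p) ℂ :=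
      Matrix.of fun i j => g2 (Matrix.single i j 1) with hG2
    have hgrep : ∀ (M N : Matrix (Fin p) (Fin p) ℂ), g (M, N) = P M G1 + P N G2 := by
      intro M N
      rw [prod_dual_rep, ← hg1, ← hg2, P_rep g1 M, P_rep g2 N]
    have eqY : ∀ Y : Matrix (Fin t) (Fin p) ℂ,
        P Y (Axyᵀ * (G1 - G1ᵀ) + Bxyᵀ * (G2 - G2ᵀ)) = 0 := by
      intro Y
      have h0 := hg Y
      rw [show Ψ Y = (Axy * Y - Yᵀ * Axyᵀ, Bxy * Y - Yᵀ * Bxyᵀ) by simp [hΨ]] at h0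
      rw [hgrep] at h0
      have t1 : P (Axy * Y - Yᵀ * Axyᵀ) G1 = P Y (Axyᵀ * (G1 - G1ᵀ)) := by
        rw [P_sub_left, P_mul_left, P_mul_right, P_transpose, Matrix.transpose_mul,
          Matrix.transpose_transpose, Matrix.mul_sub, P_sub_right]
      have t2 : P (Bxy * Y - Yᵀ * Bxyᵀ) G2 = P Y (Bxyᵀ * (G2 - G2ᵀ)) := by
        rw [P_sub_left, P_mul_left, P_mul_right, P_transpose, Matrix.transpose_mul,
          Matrix.transpose_transpose, Matrix.mul_sub, P_sub_right]
      rw [t1, t2] at h0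
      rw [P_add_right]
      exact h0
    have hEY : Axyᵀ * (G1 - G1ᵀ) + Bxyᵀ * (G2 - G2ᵀ) = 0 := P_ext eqY
    set W1 := G1 - G1ᵀ with hW1def
    set W2 := G2 - G2ᵀ with hW2def
    have hW1s : W1ᵀ = -W1 := by
      rw [hW1def, Matrix.transpose_sub, Matrix.transpose_transpose, neg_sub]
    have hW2s : W2ᵀ = -W2 := by
      rw [hW2def, Matrix.transpose_sub, Matrix.transpose_transpose, neg_sub]
    have hrow : W1 * Axy + W2 * Bxy = 0 := by
      have := congrArg Matrix.transpose hEY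
      rw [Matrix.transpose_add, Matrix.transpose_mul, Matrix.transpose_mul,
        Matrix.transpose_transpose, Matrix.transpose_transpose, hW1s, hW2s,
        Matrix.neg_mul, Matrix.neg_mul, Matrix.transpose_zero, ← neg_add, neg_eq_zero] at this
      exact this
    obtain ⟨hw1, hw2⟩ := claimA Axy Bxy h1 h1inf W1 W2 hW1s hW2s hrow
    have hG1symm : G1ᵀ = G1 := (sub_eq_zero.mp hw1).symm
    have hG2symm : G2ᵀ = G2 := (sub_eq_zero.mp hw2).symm
    rw [hgrep, P_skew_symm hS1 hG1symm, P_skew_symm hS2 hG2symm, add_zero]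
  obtain ⟨Y, hY⟩ := hmem
  rw [hΨ] at hY
  simp only [LinearMap.coe_mk, AddHom.coe_mk, Prod.mk.injEq] at hY
  exact ⟨Y, hY.1, hY.2⟩

end Exists
lemma fromRows_add {m₁ m₂ n : Type*} (A B : Matrix m₁ n ℂ) (C D : Matrix m₂ n ℂ) :
    fromRows A C + fromRows B D = fromRows (A + B) (C + D) := by
  ext (i | i) j <;> rfl

lemma fromColumns_add {m n₁ n₂ : Type*} (A B : Matrix m n₁ ℂ) (C D : Matrix m n₂ ℂ) :
    fromCols A C + fromCols B D = fromCols (A + B) (C + D) := by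
  ext i (j | j) <;> rfl

lemma congr_block {p s t : ℕ}
    (Mxx : Matrix (Fin p) (Fin p) ℂ) (Mxs : Matrix (Fin p) (Fin s) ℂ)
    (Mxy : Matrix (Fin p) (Fin t) ℂ) (Mss : Matrix (Fin s) (Fin s) ℂ)
    (hMss : Mssᵀ = -Mss)
    (Xt : Matrix (Fin p) (Fin s) ℂ) (Y : Matrix (Fin t) (Fin p) ℂ)
    (Z : Matrix (Fin t) (Fin s) ℂ)
    (hE1 : Mxs + Xt * Mss + Mxy * Z = 0)
    (hE2 : Mxx + Mxs * Xtᵀ + Mxy * Y - Xt * Mxsᵀ + Xt * Mss * Xtᵀ - Yᵀ * Mxyᵀ = 0) :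
    (fromBlocks 1 0 (fromRows Xtᵀ Y) (fromBlocks 1 0 Z 1))ᵀ *
      triMat Mxx Mxs Mxy Mss *
      (fromBlocks 1 0 (fromRows Xtᵀ Y) (fromBlocks 1 0 Z 1)) = triMat 0 0 Mxy Mss := by
  simp only [triMat, Matrix.fromBlocks_transpose, Matrix.transpose_fromRows,
    Matrix.transpose_one, Matrix.transpose_zero, Matrix.fromBlocks_multiply,
    Matrix.fromBlocks_mul_fromRows, Matrix.fromCols_mul_fromBlocks,
    Matrix.fromCols_mul_fromRows, Matrix.mul_one, Matrix.one_mul, Matrix.mul_zero,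
    Matrix.zero_mul, add_zero, zero_add, fromRows_add, fromColumns_add]
  rw [Matrix.fromBlocks_inj]
  refine ⟨?_, ?_, ?_, ?_⟩
  · simp only [Matrix.transpose_transpose, Matrix.mul_neg, Matrix.add_mul]
    rw [← hE2]
    abel
  · simp only [Matrix.transpose_transpose]
    rw [hE1]
  · have h3 := congrArg Matrix.transpose hE1
    simp only [Matrix.transpose_add, Matrix.transpose_mul, hMss, Matrix.transpose_zero,
      Matrix.neg_mul, Matrix.mul_neg] at h3
    have h4 := congrArg Neg.neg h3
    rw [neg_zero] at h4
    rw [Matrix.fromRows_ext_iff]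
    refine ⟨?_, rfl⟩
    rw [neg_zero, ← h4]
    simp only [Matrix.mul_neg]
    abel
  · rfl


end JKHelpers

open JKHelpers

/-- A skew-symmetric pencil of the block form of Lemma on JK invariants for
block upper-triangular pencils is congruent to the direct sum of its Kronecker
part `P_K` and its Jordan part `P_J`. -/
theorem JK_decomposition_block_upper_triangular
    (p s t : ℕ)
    (Axx Bxx : Matrix (Fin p) (Fin p) ℂ)
    (Axs Bxs : Matrix (Fin p) (Fin s) ℂ)
    (Axy Bxy : Matrix (Fin p) (Fin t) ℂ)
    (Ass Bss : Matrix (Fin s) (Fin s) ℂ)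
    (hAxx : Axxᵀ = -Axx) (hBxx : Bxxᵀ = -Bxx)
    (hAss : Assᵀ = -Ass) (hBss : Bssᵀ = -Bss)
    -- (1) `(Axy + λ Bxy)ᵀ` has trivial kernel for every `λ ∈ ℂ ∪ {∞}`
    (h1 : ∀ lam : ℂ, ∀ u : Fin p → ℂ,
      (Axy + lam • Bxy)ᵀ.mulVec u = 0 → u = 0)
    (h1inf : ∀ u : Fin p → ℂ, Bxyᵀ.mulVec u = 0 → u = 0)
    -- (2) `Ass + λ₀ Bss` is nondegenerate for some `λ₀ ∈ ℂ ∪ {∞}`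
    (h2 : (∃ lam₀ : ℂ, IsUnit (Ass + lam₀ • Bss).det) ∨ IsUnit Bss.det) :
    ∃ T : Matrix (Fin p ⊕ (Fin s ⊕ Fin t)) (Fin p ⊕ (Fin s ⊕ Fin t)) ℂ,
      IsUnit T.det ∧
      Tᵀ * triMat Axx Axs Axy Ass * T = triMat 0 0 Axy Ass ∧
      Tᵀ * triMat Bxx Bxs Bxy Bss * T = triMat 0 0 Bxy Bss := by
  obtain ⟨X, Z, hEA, hEB⟩ := exists_XZ Axs Bxs Axy Bxy Ass Bss h1 h1inf h2
  set S1 : Matrix (Fin p) (Fin p) ℂ :=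
    -(Axx + Axs * Xᵀ - X * Axsᵀ + X * Ass * Xᵀ) with hS1def
  set S2 : Matrix (Fin p) (Fin p) ℂ :=
    -(Bxx + Bxs * Xᵀ - X * Bxsᵀ + X * Bss * Xᵀ) with hS2def
  have hS1 : S1ᵀ = -S1 := by
    simp only [hS1def, Matrix.transpose_neg, Matrix.transpose_add, Matrix.transpose_sub,
      Matrix.transpose_mul, Matrix.transpose_transpose, hAxx, hAss, Matrix.mul_neg,
      Matrix.neg_mul, Matrix.mul_assoc]
    abel
  have hS2 : S2ᵀ = -S2 := by
    simp only [hS2def, Matrix.transpose_neg, Matrix.transpose_add, Matrix.transpose_sub,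
      Matrix.transpose_mul, Matrix.transpose_transpose, hBxx, hBss, Matrix.mul_neg,
      Matrix.neg_mul, Matrix.mul_assoc]
    abel
  obtain ⟨Y, hYA, hYB⟩ := exists_Y Axy Bxy h1 h1inf S1 S2 hS1 hS2
  refine ⟨fromBlocks 1 0 (fromRows Xᵀ Y) (fromBlocks 1 0 Z 1), ?_, ?_, ?_⟩
  · rw [Matrix.det_fromBlocks_zero₁₂, Matrix.det_fromBlocks_zero₁₂]
    simp
  · refine congr_block Axx Axs Axy Ass hAss X Y Z hEA ?_
    have hre : Axx + Axs * Xᵀ + Axy * Y - X * Axsᵀ + X * Ass * Xᵀ - Yᵀ * Axyᵀ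
        = (Axx + Axs * Xᵀ - X * Axsᵀ + X * Ass * Xᵀ) + (Axy * Y - Yᵀ * Axyᵀ) := by abel
    rw [hre, hYA, hS1def, add_neg_cancel]
  · refine congr_block Bxx Bxs Bxy Bss hBss X Y Z hEB ?_
    have hre : Bxx + Bxs * Xᵀ + Bxy * Y - X * Bxsᵀ + X * Bss * Xᵀ - Yᵀ * Bxyᵀ
        = (Bxx + Bxs * Xᵀ - X * Bxsᵀ + X * Bss * Xᵀ) + (Bxy * Y - Yᵀ * Bxyᵀ) := by abel
    rw [hre, hYB, hS2def, add_neg_cancel]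

end
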